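/- Fix design points 0 ≤ x₁ < ⋯ < xₙ ≤ 1 and data Y₁,…,Yₙ ∈ ℝ. Let F = ⋃_{m ∈ [0,1]} F^m be the class of all S-shaped functions on [0,1]. Then f ↦ Σᵢ (Yᵢ − f(xᵢ))² attains its infimum over F, and there exists a minimizer with an inflection point in {x₁,…,xₙ}. -/

import Mathlib

open Set Finset

/-- Slope of the chord between design points `i` and `i+1`. -/
noncomputable def sl (x v : ℕ → ℝ) (i : ℕ) : ℝ := (v (i+1) - v i) / (x (i+1) - x i)

/-- The cone of value-vectors of S-shaped functions with inflection at `x j`. -/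
def Vset (n : ℕ) (x : ℕ → ℝ) (j : ℕ) (v : ℕ → ℝ) : Prop :=
  (∀ i, 1 ≤ i → i + 1 ≤ n → v i ≤ v (i+1)) ∧
  (∀ i, 1 ≤ i → i + 2 ≤ j → sl x v i ≤ sl x v (i+1)) ∧
  (∀ i, 1 ≤ i → j ≤ i → i + 2 ≤ n → sl x v (i+1) ≤ sl x v i)

section basic
variable {n : ℕ} {x : ℕ → ℝ}

lemma xlt (hx : ∀ i, 1 ≤ i → i < n → x i < x (i + 1)) :
    ∀ a b, 1 ≤ a → a < b → b ≤ n → x a < x b := by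
  intro a b ha hab hbn
  induction b with
  | zero => omega
  | succ c ih =>
    rcases Nat.lt_or_ge a c with h | h
    · exact (ih (by omega) (by omega)).trans (hx c (by omega) (by omega))
    · have : a = c := by omega
      subst this; exact hx a ha (by omega)

lemma xle (hx : ∀ i, 1 ≤ i → i < n → x i < x (i + 1)) :
    ∀ a b, 1 ≤ a → a ≤ b → b ≤ n → x a ≤ x b := by
  intro a b ha hab hbn
  rcases eq_or_lt_of_le hab with rfl | h
  · exact le_refl _
  · exact (xlt hx a b ha h hbn).le

lemma slmul (hx : ∀ i, 1 ≤ i → i < n → x i < x (i + 1)) (v : ℕ → ℝ) (i : ℕ) (h1 : 1 ≤ i) (h2 : i + 1 ≤ n) :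
    sl x v i * (x (i+1) - x i) = v (i+1) - v i := by
  have := hx i h1 (by omega)
  rw [sl, div_mul_cancel₀]
  linarith

lemma vmono {v : ℕ → ℝ} {j : ℕ} (hv : Vset n x j v) :
    ∀ a b, 1 ≤ a → a ≤ b → b ≤ n → v a ≤ v b := by
  intro a b ha hab hbn
  induction b with
  | zero => omega
  | succ c ih =>
    rcases Nat.lt_or_ge a c with h | h
    · exact (ih (by omega) (by omega)).trans (hv.1 c (by omega) (by omega))
    · rcases Nat.lt_or_ge a (c+1) with h' | h'
      · have : a = c := by omega
        subst this; exact hv.1 a ha (by omega)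
      · have : a = c + 1 := by omega
        subst this; exact le_refl _

lemma slnonneg (hx : ∀ i, 1 ≤ i → i < n → x i < x (i + 1)) {v : ℕ → ℝ} {j : ℕ} (hv : Vset n x j v) (i : ℕ) (h1 : 1 ≤ i)
    (h2 : i + 1 ≤ n) : 0 ≤ sl x v i := by
  have h := hx i h1 (by omega)
  have := hv.1 i h1 h2
  exact div_nonneg (by linarith) (by linarith)

lemma slmono {v : ℕ → ℝ} {j : ℕ} (hv : Vset n x j v) :
    ∀ a b, 1 ≤ a → a ≤ b → b + 1 ≤ j → sl x v a ≤ sl x v b := by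
  intro a b ha hab hbj
  induction b with
  | zero => omega
  | succ c ih =>
    rcases Nat.lt_or_ge a (c+1) with h | h
    · exact (ih (by omega) (by omega)).trans (hv.2.1 c (by omega) (by omega))
    · have : a = c + 1 := by omega
      subst this; exact le_refl _

lemma slanti {v : ℕ → ℝ} {j : ℕ} (hv : Vset n x j v) :
    ∀ a b, 1 ≤ a → j ≤ a → a ≤ b → b + 1 ≤ n → sl x v b ≤ sl x v a := by
  intro a b ha hja hab hbn
  induction b with
  | zero => omega
  | succ c ih =>
    rcases Nat.lt_or_ge a (c+1) with h | h
    · exact (hv.2.2 c (by omega) (by omega) (by omega)).trans (ih (by omega) (by omega))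
    · have : a = c + 1 := by omega
      subst this; exact le_refl _

end basic

lemma construct (n j : ℕ) (hj1 : 1 ≤ j) (hjn : j ≤ n) (x v : ℕ → ℝ)
    (hx : ∀ i, 1 ≤ i → i < n → x i < x (i + 1))
    (hv : Vset n x j v) :
    ∃ f : ℝ → ℝ, ConvexOn ℝ (Set.Icc 0 (x j)) f ∧ ConcaveOn ℝ (Set.Icc (x j) 1) f ∧
      MonotoneOn f (Set.Icc (0:ℝ) 1) ∧ ∀ i, 1 ≤ i → i ≤ n → f (x i) = v i := by
  classical
  set L : ℕ → ℝ → ℝ := fun k t => if k = 0 then v 1 else v k + sl x v k * (t - x k) with hL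
  set R : ℕ → ℝ → ℝ := fun k t => if k = n then v n else v k + sl x v k * (t - x k) with hR
  have hne1 : (Finset.range j).Nonempty := ⟨0, Finset.mem_range.2 (by omega)⟩
  have hne2 : (Finset.Icc j n).Nonempty := ⟨j, Finset.mem_Icc.2 ⟨le_refl _, hjn⟩⟩
  set gmax : ℝ → ℝ := fun t => (Finset.range j).sup' hne1 (fun k => L k t) with hgmax
  set gmin : ℝ → ℝ := fun t => (Finset.Icc j n).inf' hne2 (fun k => R k t) with hgmin
  have UB : ∀ k, k < j → ∀ i, 1 ≤ i → i ≤ j → L k (x i) ≤ v i := by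
    intro k hk i h1 hi
    rcases Nat.eq_zero_or_pos k with rfl | hk1
    · simpa [hL] using vmono hv 1 i le_rfl h1 (hi.trans hjn)
    have hk0 : ¬ k = 0 := by omega
    rcases le_or_gt k i with hki | hik
    · obtain ⟨d, rfl⟩ := Nat.exists_eq_add_of_le hki
      have main : ∀ d', k + d' ≤ j → L k (x (k+d')) ≤ v (k+d') := by
        intro d'
        induction d' with
        | zero => simp [hL, hk0]
        | succ e ih =>
          intro hkej
          have h2 := ih (by omega)
          have hsl : sl x v k ≤ sl x v (k+e) := slmono hv k (k+e) hk1 (by omega) (by omega)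
          have hmul := slmul hx v (k+e) (by omega) (by omega)
          have hd : x (k+e) < x (k+e+1) := hx (k+e) (by omega) (by omega)
          have hnn : 0 ≤ sl x v (k+e) := slnonneg hx hv (k+e) (by omega) (by omega)
          simp only [hL, if_neg hk0] at h2 ⊢
          rw [show k + (e+1) = k + e + 1 from rfl]
          nlinarith [h2, hsl, hmul, hd]
      exact main d hi
    · obtain ⟨d, hd⟩ := Nat.exists_eq_add_of_le hik.le
      have main : ∀ d' i', 1 ≤ i' → i' + d' = k → L k (x i') ≤ v i' := by
        intro d'
        induction d' with
        | zero =>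
          intro i' h1' he
          have hik' : i' = k := by omega
          subst hik'
          simp [hL, hk0]
        | succ e ih =>
          intro i' h1' he
          have h2 := ih (i'+1) (by omega) (by omega)
          have hsl : sl x v i' ≤ sl x v k := slmono hv i' k h1' (by omega) (by omega)
          have hmul := slmul hx v i' h1' (by omega)
          have hdp : x i' < x (i'+1) := hx i' h1' (by omega)
          simp only [hL, if_neg hk0] at h2 ⊢
          nlinarith [h2, hsl, hmul, hdp]
      exact main (k - i) i h1 (by omega)
  have le_gmax : ∀ k, k < j → ∀ t, L k t ≤ gmax t := fun k hk t =>
    Finset.le_sup' (fun k => L k t) (Finset.mem_range.2 hk)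
  have gmax_val : ∀ i, 1 ≤ i → i ≤ j → gmax (x i) = v i := by
    intro i h1 hi
    apply le_antisymm
    · exact Finset.sup'_le _ _ fun k hk => UB k (Finset.mem_range.1 hk) i h1 hi
    · rcases lt_or_eq_of_le hi with hij | rfl
      · have hLi : L i (x i) = v i := by
          simp only [hL, if_neg (show ¬ i = 0 by omega), sub_self, mul_zero, add_zero]
        rw [← hLi]; exact le_gmax i hij (x i)
      · rcases eq_or_lt_of_le h1 with rfl | h2
        · have hL0 : L 0 (x 1) = v 1 := by simp [hL]
          rw [← hL0]; exact le_gmax 0 (by omega) (x 1)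
        · have e1 : i - 1 + 1 = i := by omega
          have hmul := slmul hx v (i-1) (by omega) (by omega)
          rw [e1] at hmul
          have hLi : L (i-1) (x i) = v i := by
            simp only [hL, if_neg (show ¬ i - 1 = 0 by omega)]
            linarith [hmul]
          rw [← hLi]; exact le_gmax (i-1) (by omega) (x i)
  -- lower bounds for the min side
  have LB : ∀ k, j ≤ k → k ≤ n → ∀ i, j ≤ i → i ≤ n → v i ≤ R k (x i) := by
    intro k hjk hkn i hji hin
    rcases eq_or_lt_of_le hkn with rfl | hkn'
    · simpa [hR] using vmono hv i k (hj1.trans hji) hin le_rfl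
    have hk0 : ¬ k = n := by omega
    rcases le_or_gt k i with hki | hik
    · obtain ⟨d, rfl⟩ := Nat.exists_eq_add_of_le hki
      have main : ∀ d', k + d' ≤ n → v (k+d') ≤ R k (x (k+d')) := by
        intro d'
        induction d' with
        | zero => simp [hR, hk0]
        | succ e ih =>
          intro hke
          have h2 := ih (by omega)
          have hsl : sl x v (k+e) ≤ sl x v k :=
            slanti hv k (k+e) (hj1.trans hjk) hjk (by omega) (by omega)
          have hmul := slmul hx v (k+e) (by omega) (by omega)
          have hd : x (k+e) < x (k+e+1) := hx (k+e) (by omega) (by omega)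
          simp only [hR, if_neg hk0] at h2 ⊢
          rw [show k + (e+1) = k + e + 1 from rfl]
          nlinarith [h2, hsl, hmul, hd]
      exact main d hin
    · have main : ∀ d' i', j ≤ i' → i' + d' = k → v i' ≤ R k (x i') := by
        intro d'
        induction d' with
        | zero =>
          intro i' hji' he
          have hik' : i' = k := by omega
          subst hik'
          simp [hR, hk0]
        | succ e ih =>
          intro i' hji' he
          have h2 := ih (i'+1) (by omega) (by omega)
          have hsl : sl x v k ≤ sl x v i' :=
            slanti hv i' k (hj1.trans hji') hji' (by omega) (by omega)
          have hmul := slmul hx v i' (hj1.trans hji') (by omega)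
          have hdp : x i' < x (i'+1) := hx i' (hj1.trans hji') (by omega)
          simp only [hR, if_neg hk0] at h2 ⊢
          nlinarith [h2, hsl, hmul, hdp]
      exact main (k - i) i hji (by omega)
  have gmin_val : ∀ i, j ≤ i → i ≤ n → gmin (x i) = v i := by
    intro i hji hin
    apply le_antisymm
    · have : R i (x i) = v i := by
        by_cases h : i = n <;> simp [hR, h]
      calc gmin (x i) ≤ R i (x i) :=
            Finset.inf'_le (fun k => R k (x i)) (Finset.mem_Icc.2 ⟨hji, hin⟩)
        _ = v i := this
    · exact Finset.le_inf' _ _ fun k hk =>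
        LB k (Finset.mem_Icc.1 hk).1 (Finset.mem_Icc.1 hk).2 i hji hin
  -- slopes of the lines are nonnegative
  have Lslope : ∀ k, k < j → k ≠ 0 → 0 ≤ sl x v k := fun k hk hk0 =>
    slnonneg hx hv k (by omega) (by omega)
  have Rslope : ∀ k, j ≤ k → k ≠ n → k ≤ n → 0 ≤ sl x v k := fun k hk hk0 hkn =>
    slnonneg hx hv k (hj1.trans hk) (by omega)
  have Lmono : ∀ k, k < j → Monotone (L k) := by
    intro k hk p q hpq
    rcases Nat.eq_zero_or_pos k with rfl | hk1
    · simp [hL]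
    · have := Lslope k hk (by omega)
      simp only [hL, if_neg (by omega : ¬ k = 0)]
      nlinarith [this, hpq]
  have Rmono : ∀ k, j ≤ k → k ≤ n → Monotone (R k) := by
    intro k hjk hkn p q hpq
    by_cases h : k = n
    · simp [hR, h]
    · have := Rslope k hjk h hkn
      simp only [hR, if_neg h]
      nlinarith [this, hpq]
  have gmax_mono : Monotone gmax := by
    intro p q hpq
    exact Finset.sup'_le _ _ fun k hk =>
      (Lmono k (Finset.mem_range.1 hk) hpq).trans
        (Finset.le_sup' (fun k => L k q) hk)
  have gmin_mono : Monotone gmin := by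
    intro p q hpq
    exact Finset.le_inf' _ _ fun k hk =>
      (Finset.inf'_le _ hk).trans (Rmono k (Finset.mem_Icc.1 hk).1 (Finset.mem_Icc.1 hk).2 hpq)
  have Laff : ∀ k (a b p q : ℝ), a + b = 1 → L k (a * p + b * q) = a * L k p + b * L k q := by
    intro k a b p q hab
    have hb : b = 1 - a := by linarith
    subst hb
    by_cases h : k = 0 <;> simp [hL, h] <;> ring
  have Raff : ∀ k (a b p q : ℝ), a + b = 1 → R k (a * p + b * q) = a * R k p + b * R k q := by
    intro k a b p q hab
    have hb : b = 1 - a := by linarith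
    subst hb
    by_cases h : k = n <;> simp [hR, h] <;> ring
  have gmax_cvx : ∀ (p q a b : ℝ), 0 ≤ a → 0 ≤ b → a + b = 1 →
      gmax (a * p + b * q) ≤ a * gmax p + b * gmax q := by
    intro p q a b ha hb hab
    obtain ⟨k, hk, hke⟩ := Finset.exists_mem_eq_sup' hne1 (fun k => L k (a * p + b * q))
    rw [hgmax]
    simp only []
    rw [hke, Laff k a b p q hab]
    have h1 : L k p ≤ gmax p := Finset.le_sup' (fun k => L k p) hk
    have h2 : L k q ≤ gmax q := Finset.le_sup' (fun k => L k q) hk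
    exact add_le_add (mul_le_mul_of_nonneg_left h1 ha) (mul_le_mul_of_nonneg_left h2 hb)
  have gmin_ccv : ∀ (p q a b : ℝ), 0 ≤ a → 0 ≤ b → a + b = 1 →
      a * gmin p + b * gmin q ≤ gmin (a * p + b * q) := by
    intro p q a b ha hb hab
    obtain ⟨k, hk, hke⟩ := Finset.exists_mem_eq_inf' hne2 (fun k => R k (a * p + b * q))
    rw [hgmin]
    simp only []
    rw [hke, Raff k a b p q hab]
    have h1 : gmin p ≤ R k p := Finset.inf'_le (fun k => R k p) hk
    have h2 : gmin q ≤ R k q := Finset.inf'_le (fun k => R k q) hk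
    exact add_le_add (mul_le_mul_of_nonneg_left h1 ha) (mul_le_mul_of_nonneg_left h2 hb)
  have hglue : gmax (x j) = v j := gmax_val j hj1 le_rfl
  have hglue2 : gmin (x j) = v j := gmin_val j le_rfl hjn
  refine ⟨fun t => if t ≤ x j then gmax t else gmin t, ?_, ?_, ?_, ?_⟩
  · refine ⟨convex_Icc _ _, fun p hp q hq a b ha hb hab => ?_⟩
    have hpj : p ≤ x j := hp.2
    have hqj : q ≤ x j := hq.2
    have hcomb : a • p + b • q ≤ x j := by
      simp only [smul_eq_mul]
      calc a * p + b * q ≤ a * x j + b * x j :=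
            add_le_add (mul_le_mul_of_nonneg_left hpj ha) (mul_le_mul_of_nonneg_left hqj hb)
        _ = x j := by rw [← add_mul, hab, one_mul]
    simp only [smul_eq_mul] at hcomb ⊢
    rw [if_pos hcomb, if_pos hpj, if_pos hqj]
    exact gmax_cvx p q a b ha hb hab
  · have hagree : ∀ t, x j ≤ t → (if t ≤ x j then gmax t else gmin t) = gmin t := by
      intro t ht
      by_cases h : t ≤ x j
      · have : t = x j := le_antisymm h ht
        subst this
        simp [hglue, hglue2]
      · simp [h]
    refine ⟨convex_Icc _ _, fun p hp q hq a b ha hb hab => ?_⟩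
    have hcomb : x j ≤ a • p + b • q := by
      simp only [smul_eq_mul]
      calc x j = a * x j + b * x j := by rw [← add_mul, hab, one_mul]
        _ ≤ a * p + b * q :=
            add_le_add (mul_le_mul_of_nonneg_left hp.1 ha) (mul_le_mul_of_nonneg_left hq.1 hb)
    simp only [smul_eq_mul] at hcomb ⊢
    rw [hagree _ hcomb, hagree _ hp.1, hagree _ hq.1]
    exact gmin_ccv p q a b ha hb hab
  · intro p hp q hq hpq
    show (if p ≤ x j then gmax p else gmin p) ≤ (if q ≤ x j then gmax q else gmin q)
    by_cases hpj : p ≤ x j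
    · rw [if_pos hpj]
      by_cases hqj : q ≤ x j
      · rw [if_pos hqj]; exact gmax_mono hpq
      · rw [if_neg hqj]
        calc gmax p ≤ gmax (x j) := gmax_mono hpj
          _ = v j := hglue
          _ = gmin (x j) := hglue2.symm
          _ ≤ gmin q := gmin_mono (le_of_not_ge hqj)
    · have hqj : ¬ q ≤ x j := fun h => hpj (hpq.trans h)
      rw [if_neg hpj, if_neg hqj]
      exact gmin_mono hpq
  · intro i h1 hin
    show (if x i ≤ x j then gmax (x i) else gmin (x i)) = v i
    by_cases hij : i ≤ j
    · rw [if_pos (xle hx i j h1 hij hjn)]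
      exact gmax_val i h1 hij
    · have : x j < x i := xlt hx j i hj1 (by omega) hin
      rw [if_neg (not_le.2 this)]
      exact gmin_val i (by omega) hin

lemma reduce (n : ℕ) (hn : 1 ≤ n) (x : ℕ → ℝ)
    (hx : ∀ i, 1 ≤ i → i < n → x i < x (i + 1)) (hx0 : 0 ≤ x 1) (hx1 : x n ≤ 1)
    (g : ℝ → ℝ) (m : ℝ) (hm0 : 0 ≤ m) (hm1 : m ≤ 1)
    (h1 : ConvexOn ℝ (Set.Icc 0 m) g) (h2 : ConcaveOn ℝ (Set.Icc m 1) g)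
    (h3 : MonotoneOn g (Set.Icc (0:ℝ) 1)) :
    ∃ j, 1 ≤ j ∧ j ≤ n ∧ Vset n x j (fun i => g (x i)) := by
  set v : ℕ → ℝ := fun i => g (x i) with hvdef
  have hxin : ∀ i, 1 ≤ i → i ≤ n → x i ∈ Set.Icc (0:ℝ) 1 := by
    intro i hi hin
    exact ⟨le_trans hx0 (xle hx 1 i le_rfl hi hin), le_trans (xle hx i n hi hin le_rfl) hx1⟩
  have M : ∀ i, 1 ≤ i → (i:ℕ) + 1 ≤ n → v i ≤ v (i+1) := by
    intro i hi hin
    exact h3 (hxin i hi (by omega)) (hxin (i+1) (by omega) hin) (hx i hi (by omega)).le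
  have CF : ∀ i, 1 ≤ i → i + 2 ≤ n → x (i+2) ≤ m → sl x v i ≤ sl x v (i+1) := by
    intro i hi hin hcm
    have d1 : x i < x (i+1) := hx i hi (by omega)
    have d2 : x (i+1) < x (i+2) := hx (i+1) (by omega) (by omega)
    have m1 : x i ∈ Set.Icc (0:ℝ) m :=
      ⟨(hxin i hi (by omega)).1, by linarith⟩
    have m2 : x (i+2) ∈ Set.Icc (0:ℝ) m := ⟨(hxin (i+2) (by omega) hin).1, hcm⟩
    have := h1.slope_mono_adjacent m1 m2 d1 d2
    simpa [sl, hvdef] using this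
  have CC : ∀ i, 1 ≤ i → i + 2 ≤ n → m ≤ x i → sl x v (i+1) ≤ sl x v i := by
    intro i hi hin hcm
    have d1 : x i < x (i+1) := hx i hi (by omega)
    have d2 : x (i+1) < x (i+2) := hx (i+1) (by omega) (by omega)
    have m1 : x i ∈ Set.Icc m 1 := ⟨hcm, (hxin i hi (by omega)).2⟩
    have m2 : x (i+2) ∈ Set.Icc m 1 := ⟨by linarith, (hxin (i+2) (by omega) hin).2⟩
    have := h2.slope_anti_adjacent m1 m2 d1 d2
    simpa [sl, hvdef] using this
  by_cases hA : m ≤ x 1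
  · refine ⟨1, le_rfl, hn, M, ?_, ?_⟩
    · intro i hi hij; omega
    · intro i hi hji hin
      exact CC i hi hin (le_trans hA (xle hx 1 i le_rfl hi (by omega)))
  by_cases hB : x n < m
  · refine ⟨n, hn, le_rfl, M, ?_, ?_⟩
    · intro i hi hij
      exact CF i hi hij (by linarith [xle hx (i+2) n (by omega) hij le_rfl])
    · intro i hi hji hin; omega
  push_neg at hA hB
  -- find the last design point strictly below m
  have hcex : ∃ c, 1 ≤ c ∧ c < n ∧ x c < m ∧ m ≤ x (c+1) := by
    set T := Finset.filter (fun i => x i < m) (Finset.Icc 1 n) with hT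
    have hTne : T.Nonempty :=
      ⟨1, Finset.mem_filter.2 ⟨Finset.mem_Icc.2 ⟨le_rfl, hn⟩, hA⟩⟩
    have hmem := T.max'_mem hTne
    obtain ⟨hmem1, hcm⟩ := Finset.mem_filter.1 hmem
    obtain ⟨hc1, hcn⟩ := Finset.mem_Icc.1 hmem1
    have hcn' : T.max' hTne < n :=
      lt_of_le_of_ne hcn (fun h => absurd (h ▸ hcm) (not_lt.2 hB))
    have hmc1 : m ≤ x (T.max' hTne + 1) := by
      by_contra hlt
      push_neg at hlt
      have hmem2 : T.max' hTne + 1 ∈ T :=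
        Finset.mem_filter.2 ⟨Finset.mem_Icc.2 ⟨by omega, by omega⟩, hlt⟩
      have := T.le_max' _ hmem2
      omega
    exact ⟨_, hc1, hcn', hcm, hmc1⟩
  obtain ⟨c, hc1, hcn', hcm, hmc1⟩ := hcex
  by_cases hc1' : c = 1
  · subst hc1'
    refine ⟨2, by omega, by omega, M, ?_, ?_⟩
    · intro i hi hij; omega
    · intro i hi hji hin
      exact CC i hi hin (le_trans hmc1 (xle hx 2 i (by omega) hji (by omega)))
  have hc2 : 2 ≤ c := by omega
  by_cases hcn2 : c + 1 = n
  · refine ⟨c, hc1, by omega, M, ?_, ?_⟩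
    · intro i hi hij
      exact CF i hi (by omega) (by linarith [xle hx (i+2) c (by omega) hij (by omega)])
    · intro i hi hji hin; omega
  have hcn3 : c + 2 ≤ n := by omega
  by_cases hcc : sl x v (c+1) ≤ sl x v c
  · refine ⟨c, hc1, by omega, M, ?_, ?_⟩
    · intro i hi hij
      exact CF i hi (by omega) (by linarith [xle hx (i+2) c (by omega) hij (by omega)])
    · intro i hi hji hin
      rcases eq_or_lt_of_le hji with rfl | h
      · exact hcc
      · exact CC i hi hin (le_trans hmc1 (xle hx (c+1) i (by omega) h (by omega)))
  -- crossing case : show sl (c-1) ≤ sl c and take j = c + 1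
  push_neg at hcc
  have key : sl x v (c-1) ≤ sl x v c := by
    have e1 : c - 1 + 1 = c := by omega
    have d0 : x (c-1) < x c := by
      have := hx (c-1) (by omega) (by omega)
      rwa [e1] at this
    have d1 : x c < x (c+1) := hx c hc1 (by omega)
    have d2 : x (c+1) < x (c+2) := hx (c+1) (by omega) (by omega)
    rcases eq_or_lt_of_le hmc1 with heq | hlt
    · -- m = x (c+1) : the chord c lies inside [0, m]
      have m1 : x (c-1) ∈ Set.Icc (0:ℝ) m :=
        ⟨(hxin (c-1) (by omega) (by omega)).1, by linarith⟩
      have m2 : x (c+1) ∈ Set.Icc (0:ℝ) m := ⟨(hxin (c+1) (by omega) (by omega)).1, heq.ge⟩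
      have := h1.slope_mono_adjacent m1 m2 d0 d1
      simp only [sl, hvdef, e1]
      simpa [e1] using this
    · -- x c < m < x (c+1)
      have hxc : x c < m := hcm
      have m1 : x (c-1) ∈ Set.Icc (0:ℝ) m :=
        ⟨(hxin (c-1) (by omega) (by omega)).1, by linarith⟩
      have mm : m ∈ Set.Icc (0:ℝ) m := ⟨hm0, le_rfl⟩
      have mm' : m ∈ Set.Icc m (1:ℝ) := ⟨le_rfl, hm1⟩
      have m2 : x (c+2) ∈ Set.Icc m (1:ℝ) :=
        ⟨by linarith, (hxin (c+2) (by omega) (by omega)).2⟩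
      have hA2 := h1.slope_mono_adjacent m1 mm d0 hxc
      have hB2 := h2.slope_anti_adjacent mm' m2 hlt d2
      -- convert everything to product form
      have pA : (v c - v (c-1)) * (m - x c) ≤ (g m - v c) * (x c - x (c-1)) := by
        rw [div_le_div_iff₀ (by linarith) (by linarith)] at hA2
        exact hA2
      have pB : (v (c+2) - v (c+1)) * (x (c+1) - m) ≤ (g (x (c+1)) - g m) * (x (c+2) - x (c+1)) := by
        rw [div_le_div_iff₀ (by linarith) (by linarith)] at hB2
        exact hB2
      have pC : (v (c+1) - v c) * (x (c+2) - x (c+1)) < (v (c+2) - v (c+1)) * (x (c+1) - x c) := by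
        have := hcc
        rw [sl, sl, div_lt_div_iff₀ (by linarith) (by linarith)] at this
        exact this
      simp only [sl, e1]
      rw [div_le_div_iff₀ (by linarith) (by linarith)]
      have hgm : v (c+1) = g (x (c+1)) := rfl
      -- step 1 : (g m - v c) * (x (c+1) - m) < (v (c+1) - g m) * (m - x c)
      have step1 : (g m - v c) * (x (c+1) - m) < (v (c+1) - g m) * (m - x c) := by
        nlinarith [pB, pC, d2, hlt, hxc, mul_pos (sub_pos.2 hlt) (sub_pos.2 d2)]
      nlinarith [pA, step1, d0, hxc, hlt, mul_pos (sub_pos.2 hxc) (sub_pos.2 d0)]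
  refine ⟨c+1, by omega, by omega, M, ?_, ?_⟩
  · intro i hi hij
    rcases eq_or_lt_of_le hij with heq | h
    · have : i = c - 1 := by omega
      subst this
      have e1 : c - 1 + 1 = c := by omega
      rw [e1]
      exact key
    · exact CF i hi (by omega) (by linarith [xle hx (i+2) c (by omega) (by omega) (by omega)])
  · intro i hi hji hin
    exact CC i hi hin (le_trans hmc1 (xle hx (c+1) i (by omega) hji (by omega)))

lemma Vset_zero (n j : ℕ) (x : ℕ → ℝ) : Vset n x j (fun _ => 0) := by
  refine ⟨fun i _ _ => le_rfl, fun i _ _ => ?_, fun i _ _ _ => ?_⟩ <;> simp [sl]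

lemma Vset_congr (n j : ℕ) (x v v' : ℕ → ℝ) (hj : j ≤ n)
    (h : ∀ i, 1 ≤ i → i ≤ n → v i = v' i) (hv : Vset n x j v) : Vset n x j v' := by
  obtain ⟨h1, h2, h3⟩ := hv
  refine ⟨fun i hi hin => ?_, fun i hi hij => ?_, fun i hi hji hin => ?_⟩
  · rw [← h i hi (by omega), ← h (i+1) (by omega) hin]
    exact h1 i hi hin
  · have e := h2 i hi hij
    simp only [sl] at e ⊢
    rw [← h i hi (by omega), ← h (i+1) (by omega) (by omega), ← h (i+2) (by omega) (by omega)]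
    exact e
  · have e := h3 i hi hji hin
    simp only [sl] at e ⊢
    rw [← h i hi (by omega), ← h (i+1) (by omega) (by omega), ← h (i+2) (by omega) (by omega)]
    exact e

/-- extension of a finite vector to `ℕ → ℝ` -/
def extW (n : ℕ) (w : Fin (n+1) → ℝ) (i : ℕ) : ℝ := w ⟨min i n, by omega⟩

lemma Vclosed (n j : ℕ) (x : ℕ → ℝ) :
    IsClosed {w : Fin (n+1) → ℝ | Vset n x j (extW n w)} := by
  have hc : ∀ i : ℕ, Continuous fun w : Fin (n+1) → ℝ => extW n w i :=
    fun i => continuous_apply _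
  have hsl : ∀ i : ℕ, Continuous fun w : Fin (n+1) → ℝ => sl x (extW n w) i := by
    intro i
    exact ((hc (i+1)).sub (hc i)).div_const _
  have : {w : Fin (n+1) → ℝ | Vset n x j (extW n w)} =
      (⋂ i, ⋂ (_ : 1 ≤ i), ⋂ (_ : i + 1 ≤ n), {w : Fin (n+1) → ℝ | extW n w i ≤ extW n w (i+1)}) ∩
      ((⋂ i, ⋂ (_ : 1 ≤ i), ⋂ (_ : i + 2 ≤ j),
          {w : Fin (n+1) → ℝ | sl x (extW n w) i ≤ sl x (extW n w) (i+1)}) ∩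
       (⋂ i, ⋂ (_ : 1 ≤ i), ⋂ (_ : j ≤ i), ⋂ (_ : i + 2 ≤ n),
          {w : Fin (n+1) → ℝ | sl x (extW n w) (i+1) ≤ sl x (extW n w) i})) := by
    ext w
    simp only [Set.mem_inter_iff, Set.mem_iInter, Set.mem_setOf_eq, Vset]
  rw [this]
  refine IsClosed.inter ?_ (IsClosed.inter ?_ ?_)
  · exact isClosed_iInter fun i => isClosed_iInter fun _ => isClosed_iInter fun _ =>
      isClosed_le (hc i) (hc (i+1))
  · exact isClosed_iInter fun i => isClosed_iInter fun _ => isClosed_iInter fun _ =>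
      isClosed_le (hsl i) (hsl (i+1))
  · exact isClosed_iInter fun i => isClosed_iInter fun _ => isClosed_iInter fun _ =>
      isClosed_iInter fun _ => isClosed_le (hsl (i+1)) (hsl i)

lemma min_on_closed {N : ℕ} (C : Set (Fin N → ℝ)) (hC : IsClosed C)
    (w0 : Fin N → ℝ) (hw0 : w0 ∈ C) (Φ : (Fin N → ℝ) → ℝ) (hΦ : Continuous Φ)
    (R : ℝ) (hbd : ∀ w ∈ C, Φ w ≤ Φ w0 → ∀ p, w p ∈ Set.Icc (-R) R) :
    ∃ w ∈ C, ∀ u ∈ C, Φ w ≤ Φ u := by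
  have hBcpt : IsCompact (Set.pi Set.univ (fun _ : Fin N => Set.Icc (-R) R)) :=
    isCompact_univ_pi (fun _ => isCompact_Icc)
  have hKcl : IsClosed (C ∩ {w | Φ w ≤ Φ w0}) := hC.inter (isClosed_le hΦ continuous_const)
  have hKcpt : IsCompact ((C ∩ {w | Φ w ≤ Φ w0}) ∩
      Set.pi Set.univ (fun _ : Fin N => Set.Icc (-R) R)) := hBcpt.inter_left hKcl
  have hKne : ((C ∩ {w | Φ w ≤ Φ w0}) ∩
      Set.pi Set.univ (fun _ : Fin N => Set.Icc (-R) R)).Nonempty :=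
    ⟨w0, ⟨⟨hw0, show Φ w0 ≤ Φ w0 from le_rfl⟩, fun p _ => hbd w0 hw0 le_rfl p⟩⟩
  obtain ⟨w, hwK, hmin⟩ := hKcpt.exists_isMinOn hKne hΦ.continuousOn
  refine ⟨w, hwK.1.1, fun u hu => ?_⟩
  by_cases h : Φ u ≤ Φ w0
  · exact isMinOn_iff.1 hmin u ⟨⟨hu, h⟩, fun p _ => hbd u hu h p⟩
  · have := isMinOn_iff.1 hmin w0
      ⟨⟨hw0, show Φ w0 ≤ Φ w0 from le_rfl⟩, fun p _ => hbd w0 hw0 le_rfl p⟩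
    linarith [not_le.1 h]

theorem stmt3 (n : ℕ) (hn : 1 ≤ n) (x Y : ℕ → ℝ)
    (hx : ∀ i, 1 ≤ i → i < n → x i < x (i + 1))
    (hx0 : 0 ≤ x 1) (hx1 : x n ≤ 1) :
    let Fm : ℝ → (ℝ → ℝ) → Prop := fun m f =>
      ConvexOn ℝ (Set.Icc 0 m) f ∧ ConcaveOn ℝ (Set.Icc m 1) f ∧
        MonotoneOn f (Set.Icc (0 : ℝ) 1)
    let F : (ℝ → ℝ) → Prop := fun f => ∃ m ∈ Set.Icc (0 : ℝ) 1, Fm m f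
    let S : (ℝ → ℝ) → ℝ := fun f => ∑ i ∈ Finset.Icc 1 n, (Y i - f (x i)) ^ 2
    ∃ f, F f ∧ (∀ g, F g → S f ≤ S g) ∧ ∃ j ∈ Finset.Icc 1 n, Fm (x j) f := by
  intro Fm F S
  classical
  set Φ : (Fin (n+1) → ℝ) → ℝ :=
    fun w => ∑ i ∈ Finset.Icc 1 n, (Y i - extW n w i)^2 with hΦdef
  have hΦcont : Continuous Φ := by
    apply continuous_finset_sum
    intro i _
    exact (continuous_const.sub (continuous_apply _)).pow 2
  have hne : (Finset.Icc 1 n).Nonempty := ⟨1, Finset.mem_Icc.2 ⟨le_rfl, hn⟩⟩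
  set supY : ℝ := (Finset.Icc 1 n).sup' hne (fun k => |Y k|) with hsupY
  have hsupY0 : 0 ≤ supY :=
    le_trans (abs_nonneg (Y 1)) (Finset.le_sup' (fun k => |Y k|) (Finset.mem_Icc.2 ⟨le_rfl, hn⟩))
  set R : ℝ := supY + Real.sqrt (Φ 0) with hRdef
  have hR0 : 0 ≤ R := add_nonneg hsupY0 (Real.sqrt_nonneg _)
  -- per-j minimizers
  have H : ∀ j : ℕ, ∃ w : Fin (n+1) → ℝ, 1 ≤ j → j ≤ n →
      (Vset n x j (extW n w) ∧
        ∀ u : Fin (n+1) → ℝ, Vset n x j (extW n u) → Φ w ≤ Φ u) := by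
    intro j
    by_cases hj : 1 ≤ j ∧ j ≤ n
    · set C : Set (Fin (n+1) → ℝ) :=
        {w | Vset n x j (extW n w)} ∩ {w | w ⟨0, by omega⟩ = 0} with hCdef
      have hCc : IsClosed C :=
        (Vclosed n j x).inter (isClosed_eq (continuous_apply _) continuous_const)
      have h0 : (0 : Fin (n+1) → ℝ) ∈ C := ⟨Vset_zero n j x, rfl⟩
      have hbd : ∀ w ∈ C, Φ w ≤ Φ 0 → ∀ p, w p ∈ Set.Icc (-R) R := by
        intro w hw hΦw p
        by_cases hp : (p : ℕ) = 0
        · have : p = ⟨0, by omega⟩ := Fin.ext hp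
          rw [this, hw.2]
          exact ⟨by linarith, by linarith⟩
        · have hp1 : 1 ≤ (p : ℕ) := by omega
          have hpn : (p : ℕ) ≤ n := by omega
          have hterm : (Y (p : ℕ) - extW n w (p : ℕ))^2 ≤ Φ w := by
            apply Finset.single_le_sum (f := fun i => (Y i - extW n w i)^2)
            · intro i _; exact sq_nonneg _
            · exact Finset.mem_Icc.2 ⟨hp1, hpn⟩
          have hext : extW n w (p : ℕ) = w p := by
            unfold extW
            congr 1
            exact Fin.ext (by simp [min_eq_left hpn])
          have h1 : |Y (p : ℕ) - w p| ≤ Real.sqrt (Φ 0) := by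
            rw [← Real.sqrt_sq_eq_abs]
            apply Real.sqrt_le_sqrt
            rw [← hext]
            linarith
          have h2 : |Y (p : ℕ)| ≤ supY :=
            Finset.le_sup' (fun k => |Y k|) (Finset.mem_Icc.2 ⟨hp1, hpn⟩)
          have : |w p| ≤ R := by
            have := abs_sub_abs_le_abs_sub (w p) (Y (p : ℕ))
            have h3 : |w p - Y (p : ℕ)| = |Y (p : ℕ) - w p| := abs_sub_comm _ _
            rw [hRdef]
            linarith [abs_nonneg (w p)]
          exact abs_le.1 this
      obtain ⟨w, hwC, hwmin⟩ := min_on_closed C hCc 0 h0 Φ hΦcont R hbd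
      refine ⟨w, fun _ _ => ⟨hwC.1, fun u hu => ?_⟩⟩
      set u' := Function.update u ⟨0, by omega⟩ 0 with hu'def
      have hu'ext : ∀ i, 1 ≤ i → i ≤ n → extW n u i = extW n u' i := by
        intro i hi hin
        unfold extW
        rw [hu'def, Function.update_of_ne]
        exact Fin.ne_of_val_ne (by simp; omega)
      have hu'C : u' ∈ C := by
        constructor
        · exact Vset_congr n j x (extW n u) (extW n u') hj.2 hu'ext hu
        · exact Function.update_self _ _ _
      have hΦu' : Φ u' = Φ u := by
        apply Finset.sum_congr rfl
        intro i hi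
        obtain ⟨h1, h2⟩ := Finset.mem_Icc.1 hi
        rw [hu'ext i h1 h2]
      calc Φ w ≤ Φ u' := hwmin u' hu'C
        _ = Φ u := hΦu'
    · exact ⟨0, fun h1 h2 => absurd ⟨h1, h2⟩ hj⟩
  choose wj hwj using H
  obtain ⟨j0, hj0mem, hj0min⟩ := Finset.exists_min_image (Finset.Icc 1 n)
    (fun j => Φ (wj j)) ⟨1, Finset.mem_Icc.2 ⟨le_rfl, hn⟩⟩
  obtain ⟨hj01, hj0n⟩ := Finset.mem_Icc.1 hj0mem
  obtain ⟨hV0, hmin0⟩ := hwj j0 hj01 hj0n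
  obtain ⟨f, hfc, hfcc, hfm, hfval⟩ := construct n j0 hj01 hj0n x (extW n (wj j0)) hx hV0
  have hxj0 : x j0 ∈ Set.Icc (0:ℝ) 1 :=
    ⟨le_trans hx0 (xle hx 1 j0 le_rfl hj01 hj0n),
      le_trans (xle hx j0 n hj01 hj0n le_rfl) hx1⟩
  have hSf : S f = Φ (wj j0) := by
    apply Finset.sum_congr rfl
    intro i hi
    obtain ⟨h1, h2⟩ := Finset.mem_Icc.1 hi
    rw [hfval i h1 h2]
  refine ⟨f, ⟨x j0, hxj0, hfc, hfcc, hfm⟩, ?_, ⟨j0, hj0mem, hfc, hfcc, hfm⟩⟩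
  intro g hg
  obtain ⟨m, hm, hg1, hg2, hg3⟩ := hg
  obtain ⟨j, hj1, hjn, hVg⟩ := reduce n hn x hx hx0 hx1 g m hm.1 hm.2 hg1 hg2 hg3
  set u : Fin (n+1) → ℝ := fun p => g (x (p : ℕ)) with hudef
  have huext : ∀ i, 1 ≤ i → i ≤ n → g (x i) = extW n u i := by
    intro i hi hin
    unfold extW
    rw [hudef]
    simp [min_eq_left hin]
  have hVu : Vset n x j (extW n u) :=
    Vset_congr n j x (fun i => g (x i)) (extW n u) hjn huext hVg
  have hSg : S g = Φ u := by
    apply Finset.sum_congr rfl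
    intro i hi
    obtain ⟨h1, h2⟩ := Finset.mem_Icc.1 hi
    rw [huext i h1 h2]
  calc S f = Φ (wj j0) := hSf
    _ ≤ Φ (wj j) := hj0min j (Finset.mem_Icc.2 ⟨hj1, hjn⟩)
    _ ≤ Φ u := (hwj j hj1 hjn).2 u hVu
    _ = S g := hSg.symm
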